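/- Let A be a residuated lattice. The space Min(A) of minimal prime filters with the hull-kernel topology is compact if and only if A is a ⋆-residuated lattice, i.e., for every x ∈ A there exists y ∈ A with x^⊥⊥ = y^⊥. -/

import Mathlib

universe u

class ResiduatedLattice (A : Type u) extends Lattice A, BoundedOrder A where
  mul : A → A → A
  himp : A → A → A
  mul_comm : ∀ x y : A, mul x y = mul y x
  mul_assoc : ∀ x y z : A, mul (mul x y) z = mul x (mul y z)
  mul_top : ∀ x : A, mul x ⊤ = x
  adjoint : ∀ x y z : A, mul x y ≤ z ↔ x ≤ himp y z

namespace RL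

variable {A : Type u} [ResiduatedLattice A]

/-- A filter: a nonempty subset closed under the monoid operation `⊙` and closed
under joins with arbitrary elements. -/
def IsFilter (F : Set A) : Prop :=
  F.Nonempty ∧ (∀ x ∈ F, ∀ y ∈ F, ResiduatedLattice.mul x y ∈ F) ∧
    (∀ x ∈ F, ∀ y : A, x ⊔ y ∈ F)

/-- A prime filter: a proper filter such that `x ⊔ y ∈ P` implies `x ∈ P` or `y ∈ P`. -/
def IsPrime (P : Set A) : Prop :=
  IsFilter P ∧ P ≠ Set.univ ∧ ∀ x y : A, x ⊔ y ∈ P → x ∈ P ∨ y ∈ P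

/-- The filter generated by a subset `X`. -/
def Fgen (X : Set A) : Set A := ⋂₀ {G : Set A | IsFilter G ∧ X ⊆ G}

/-- An `X`-minimal prime filter: a minimal element of the set of prime filters containing `X`. -/
def MinPrimeOver (X : Set A) (P : Set A) : Prop :=
  IsPrime P ∧ X ⊆ P ∧ ∀ Q : Set A, IsPrime Q → X ⊆ Q → Q ⊆ P → Q = P

/-- A minimal prime filter. -/
def MinPrime (P : Set A) : Prop :=
  IsPrime P ∧ ∀ Q : Set A, IsPrime Q → Q ⊆ P → Q = P

/-- The coannihilator of `X` belonging to `F`. -/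
def coann (F : Set A) (X : Set A) : Set A := {a : A | ∀ x ∈ X, x ⊔ a ∈ F}

/-- `X^⊥ = {a | x ⊔ a = ⊤ for all x ∈ X}`. -/
def perp (X : Set A) : Set A := {a : A | ∀ x ∈ X, x ⊔ a = ⊤}

/-- `D_F(P) = {a | (F : a) ⊄ P}`. -/
def DF (F P : Set A) : Set A := {a : A | ¬ coann F {a} ⊆ P}

/-- A `∨`-closed subset: nonempty and closed under joins. -/
def VClosed (C : Set A) : Prop := C.Nonempty ∧ ∀ x ∈ C, ∀ y ∈ C, x ⊔ y ∈ C


-- ### basic algebra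
local notation a " ⊙ " b => ResiduatedLattice.mul a b

lemma mul_mono_left {x x' : A} (h : x ≤ x') (y : A) : (x ⊙ y) ≤ x' ⊙ y := by
  have h1 : (x' ⊙ y) ≤ x' ⊙ y := le_refl _
  rw [ResiduatedLattice.adjoint] at h1 ⊢
  exact le_trans h h1

lemma mul_mono_right (x : A) {y y' : A} (h : y ≤ y') : (x ⊙ y) ≤ x ⊙ y' := by
  rw [ResiduatedLattice.mul_comm x y, ResiduatedLattice.mul_comm x y']
  exact mul_mono_left h x

lemma mul_le_left (x y : A) : (x ⊙ y) ≤ x := by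
  have := mul_mono_right x (le_top (a := y))
  rwa [ResiduatedLattice.mul_top] at this

lemma mul_le_right (x y : A) : (x ⊙ y) ≤ y := by
  rw [ResiduatedLattice.mul_comm]; exact mul_le_left y x

lemma top_mul (x : A) : (⊤ ⊙ x) = x := by
  rw [ResiduatedLattice.mul_comm]; exact ResiduatedLattice.mul_top x

lemma sup_mul_le (x y z : A) : ((x ⊔ y) ⊙ z) ≤ (x ⊙ z) ⊔ (y ⊙ z) := by
  rw [ResiduatedLattice.adjoint]
  apply sup_le <;> rw [← ResiduatedLattice.adjoint]
  · exact le_sup_left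
  · exact le_sup_right

/-- key: `(x ⊔ a) ⊙ (x ⊔ b) ≤ x ⊔ (a ⊙ b)` -/
lemma sup_mul_sup_le (x a b : A) : ((x ⊔ a) ⊙ (x ⊔ b)) ≤ x ⊔ (a ⊙ b) := by
  refine le_trans (sup_mul_le x a (x ⊔ b)) (sup_le ?_ ?_)
  · exact le_trans (mul_le_left _ _) le_sup_left
  · rw [ResiduatedLattice.mul_comm]
    refine le_trans (sup_mul_le x b a) (sup_le ?_ ?_)
    · exact le_trans (mul_le_left _ _) le_sup_left
    · rw [ResiduatedLattice.mul_comm]; exact le_sup_right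

-- ### filters
lemma IsFilter.mem_of_le {F : Set A} (hF : IsFilter F) {a b : A} (ha : a ∈ F) (h : a ≤ b) :
    b ∈ F := by
  have := hF.2.2 a ha b
  rwa [sup_eq_right.mpr h] at this

lemma IsFilter.top_mem {F : Set A} (hF : IsFilter F) : (⊤ : A) ∈ F := by
  obtain ⟨a, ha⟩ := hF.1
  exact hF.mem_of_le ha le_top

lemma IsPrime.bot_not_mem {P : Set A} (hP : IsPrime P) : (⊥ : A) ∉ P := by
  intro h
  exact hP.2.1 (Set.eq_univ_of_forall fun a => hP.1.mem_of_le h bot_le)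

lemma IsPrime.sup_not_mem {P : Set A} (hP : IsPrime P) {a b : A} (ha : a ∉ P) (hb : b ∉ P) :
    a ⊔ b ∉ P := fun h => (hP.2.2 a b h).elim ha hb

-- ### products of lists
def rprod (l : List A) : A := l.foldr ResiduatedLattice.mul ⊤

@[simp] lemma rprod_nil : rprod ([] : List A) = ⊤ := rfl

@[simp] lemma rprod_cons (a : A) (l : List A) : rprod (a :: l) = a ⊙ rprod l := rfl

lemma rprod_append (l₁ l₂ : List A) : rprod (l₁ ++ l₂) = (rprod l₁) ⊙ rprod l₂ := by
  induction l₁ with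
  | nil => simp [top_mul]
  | cons a l ih => simp [ih, ResiduatedLattice.mul_assoc]

lemma rprod_le_of_mem {l : List A} {a : A} (h : a ∈ l) : rprod l ≤ a := by
  induction l with
  | nil => simp at h
  | cons b l ih =>
    rcases List.mem_cons.mp h with rfl | h
    · exact mul_le_left _ _
    · exact le_trans (mul_le_right _ _) (ih h)

lemma rprod_mem_filter {F : Set A} (hF : IsFilter F) {l : List A} (h : ∀ a ∈ l, a ∈ F) :
    rprod l ∈ F := by
  induction l with
  | nil => exact hF.top_mem
  | cons b l ih =>
    exact hF.2.1 b (h b (List.mem_cons_self)) _ (ih fun a ha => h a (List.mem_cons_of_mem _ ha))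

def rpow (x : A) (n : ℕ) : A := rprod (List.replicate n x)

@[simp] lemma rpow_zero (x : A) : rpow x 0 = ⊤ := rfl

@[simp] lemma rpow_succ (x : A) (n : ℕ) : rpow x (n + 1) = x ⊙ rpow x n := rfl

/-- binomial-type estimate: `(x ⊔ y)^(n+m) ≤ x^n ⊔ y^m`. -/
lemma rpow_sup_le (x y : A) : ∀ k n m : ℕ, n + m = k → rpow (x ⊔ y) (n + m) ≤ rpow x n ⊔ rpow y m := by
  intro k
  induction k with
  | zero => intro n m h
            obtain ⟨rfl, rfl⟩ := Nat.add_eq_zero.mp h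
            simp
  | succ k ih =>
    intro n m h
    match n, m with
    | 0, m => exact le_trans le_top le_sup_left
    | n+1, 0 => simpa using le_trans (le_top (a := rpow (x ⊔ y) (n+1+0))) le_sup_right
    | n+1, m+1 =>
      have hs : n + 1 + (m + 1) = (n + (m + 1)) + 1 := by omega
      rw [hs, rpow_succ]
      have h1 : ((x ⊔ y) ⊙ rpow (x ⊔ y) (n + (m+1))) ≤ (x ⊙ rpow (x ⊔ y) (n + (m+1))) ⊔ (y ⊙ rpow (x ⊔ y) (n + (m+1))) :=
        sup_mul_le x y _
      refine le_trans h1 (sup_le ?_ ?_)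
      · have := mul_mono_right x (ih n (m+1) (by omega))
        refine le_trans this ?_
        rw [ResiduatedLattice.mul_comm]
        refine le_trans (sup_mul_le _ _ _) (sup_le ?_ ?_)
        · rw [ResiduatedLattice.mul_comm]; exact le_sup_left
        · exact le_trans (mul_le_left _ _) le_sup_right
      · rw [show n + (m+1) = n+1+m from by omega]
        have := mul_mono_right y (ih (n+1) m (by omega))
        refine le_trans this ?_
        rw [ResiduatedLattice.mul_comm]
        refine le_trans (sup_mul_le _ _ _) (sup_le ?_ ?_)
        · exact le_trans (mul_le_left _ _) le_sup_left
        · rw [ResiduatedLattice.mul_comm]; exact le_sup_right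

lemma rpow_mem_filter {F : Set A} (hF : IsFilter F) {x : A} (hx : x ∈ F) (n : ℕ) :
    rpow x n ∈ F := rprod_mem_filter hF (by intro a ha; rw [List.eq_of_mem_replicate ha]; exact hx)

-- ### perp
lemma mem_perp_singleton {x a : A} : a ∈ perp {x} ↔ x ⊔ a = ⊤ := by simp [perp]

lemma top_mem_perp (X : Set A) : (⊤ : A) ∈ perp X := fun x _ => by simp

lemma perp_mem_of_le {X : Set A} {a b : A} (ha : a ∈ perp X) (h : a ≤ b) : b ∈ perp X := by
  intro x hx
  exact top_le_iff.mp ((ha x hx) ▸ sup_le_sup_left h x)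

lemma mul_mem_perp {X : Set A} {a b : A} (ha : a ∈ perp X) (hb : b ∈ perp X) :
    (a ⊙ b) ∈ perp X := by
  intro x hx
  have h := sup_mul_sup_le x a b
  rw [ha x hx, hb x hx, ResiduatedLattice.mul_top] at h
  exact top_le_iff.mp h

lemma isFilter_perp (X : Set A) : IsFilter (perp X) :=
  ⟨⟨⊤, top_mem_perp X⟩, fun _ ha _ hb => mul_mem_perp ha hb,
   fun a ha y => perp_mem_of_le ha le_sup_left⟩

lemma perp_antitone {X Y : Set A} (h : X ⊆ Y) : perp Y ⊆ perp X := fun _ ha x hx => ha x (h hx)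

lemma subset_perp_perp (X : Set A) : X ⊆ perp (perp X) := by
  intro x hx a ha
  rw [sup_comm]
  exact ha x hx

lemma perp_perp_perp (X : Set A) : perp (perp (perp X)) = perp X :=
  Set.Subset.antisymm (perp_antitone (subset_perp_perp X)) (subset_perp_perp (perp X))

-- ### generated filters
lemma isFilter_univ : IsFilter (Set.univ : Set A) :=
  ⟨⟨⊤, trivial⟩, fun _ _ _ _ => trivial, fun _ _ _ => trivial⟩

lemma fgen_eq (X : Set A) :
    Fgen X = {a : A | ∃ l : List A, (∀ b ∈ l, b ∈ X) ∧ rprod l ≤ a} := by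
  have hT : IsFilter {a : A | ∃ l : List A, (∀ b ∈ l, b ∈ X) ∧ rprod l ≤ a} := by
    refine ⟨⟨⊤, [], by simp⟩, ?_, ?_⟩
    · rintro a ⟨l₁, hl₁, h₁⟩ b ⟨l₂, hl₂, h₂⟩
      refine ⟨l₁ ++ l₂, ?_, ?_⟩
      · intro c hc; rcases List.mem_append.mp hc with h | h
        · exact hl₁ c h
        · exact hl₂ c h
      · rw [rprod_append]
        exact le_trans (mul_mono_left h₁ _) (mul_mono_right _ h₂)
    · rintro a ⟨l, hl, h⟩ y
      exact ⟨l, hl, le_trans h le_sup_left⟩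
  apply Set.Subset.antisymm
  · intro a ha
    exact ha _ ⟨hT, fun x hx => ⟨[x], by simpa using hx, by simp [ResiduatedLattice.mul_top]⟩⟩
  · rintro a ⟨l, hl, h⟩ G ⟨hG, hXG⟩
    exact hG.mem_of_le (rprod_mem_filter hG (fun b hb => hXG (hl b hb))) h

lemma subset_fgen (X : Set A) : X ⊆ Fgen X := fun x hx => by
  rw [fgen_eq]
  exact ⟨[x], by simpa using hx, by simp [ResiduatedLattice.mul_top]⟩

lemma isFilter_fgen (X : Set A) : IsFilter (Fgen X) := by
  rw [fgen_eq]
  refine ⟨⟨⊤, [], by simp⟩, ?_, ?_⟩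
  · rintro a ⟨l₁, hl₁, h₁⟩ b ⟨l₂, hl₂, h₂⟩
    refine ⟨l₁ ++ l₂, ?_, ?_⟩
    · intro c hc; rcases List.mem_append.mp hc with h | h
      · exact hl₁ c h
      · exact hl₂ c h
    · rw [rprod_append]
      exact le_trans (mul_mono_left h₁ _) (mul_mono_right _ h₂)
  · rintro a ⟨l, hl, h⟩ y
    exact ⟨l, hl, le_trans h le_sup_left⟩


-- ### prime filter extension theorem
lemma prime_extension {F C : Set A} (hF : IsFilter F) (hC : VClosed C) (hd : F ∩ C = ∅) :
    ∃ P : Set A, IsPrime P ∧ F ⊆ P ∧ P ∩ C = ∅ := by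
  classical
  set S : Set (Set A) := {G | IsFilter G ∧ F ⊆ G ∧ G ∩ C = ∅} with hS
  obtain ⟨P, hFP, hPS, hPmax⟩ : ∃ P, F ⊆ P ∧ Maximal (· ∈ S) P := by
    apply zorn_subset_nonempty S ?_ F ⟨hF, Set.Subset.rfl, hd⟩
    intro c hcS hchain hcne
    refine ⟨⋃₀ c, ⟨⟨?_, ?_, ?_⟩, ?_, ?_⟩, fun s hs => Set.subset_sUnion_of_mem hs⟩
    · obtain ⟨G, hG⟩ := hcne
      obtain ⟨a, ha⟩ := (hcS hG).1.1
      exact ⟨a, G, hG, ha⟩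
    · rintro x ⟨G₁, hG₁, hx⟩ y ⟨G₂, hG₂, hy⟩
      rcases hchain.total hG₁ hG₂ with h | h
      · exact ⟨G₂, hG₂, (hcS hG₂).1.2.1 x (h hx) y hy⟩
      · exact ⟨G₁, hG₁, (hcS hG₁).1.2.1 x hx y (h hy)⟩
    · rintro x ⟨G, hG, hx⟩ y
      exact ⟨G, hG, (hcS hG).1.2.2 x hx y⟩
    · obtain ⟨G, hG⟩ := hcne
      exact le_trans (hcS hG).2.1 (Set.subset_sUnion_of_mem hG)
    · rw [Set.eq_empty_iff_forall_notMem]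
      rintro a ⟨⟨G, hG, haG⟩, haC⟩
      have := (hcS hG).2.2
      rw [Set.eq_empty_iff_forall_notMem] at this
      exact this a ⟨haG, haC⟩
  obtain ⟨hPfil, -, hPC⟩ := hPS
  have hmax := hPmax
  refine ⟨P, ⟨hPfil, ?_, ?_⟩, hFP, hPC⟩
  · obtain ⟨c, hc⟩ := hC.1
    intro h
    rw [Set.eq_empty_iff_forall_notMem] at hPC
    exact hPC c ⟨h ▸ trivial, hc⟩
  · intro x y hxy
    by_contra hne
    push_neg at hne
    obtain ⟨hx, hy⟩ := hne
    -- both extensions meet C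
    have hmeet : ∀ z : A, z ∉ P → ∃ c ∈ C, ∃ p ∈ P, ∃ n : ℕ, (p ⊙ rpow z n) ≤ c := by
      intro z hz
      have hGne : ¬ (Fgen (P ∪ {z}) ∩ C = ∅) := by
        intro hempty
        have hmem : Fgen (P ∪ {z}) ∈ S :=
          ⟨isFilter_fgen _, le_trans hFP (le_trans Set.subset_union_left (subset_fgen _)), hempty⟩
        have hsub : P ⊆ Fgen (P ∪ {z}) := le_trans Set.subset_union_left (subset_fgen _)
        have := hmax hmem hsub
        exact hz (this (subset_fgen _ (by simp)))
      rw [Set.eq_empty_iff_forall_notMem] at hGne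
      push_neg at hGne
      obtain ⟨c, hcG, hcC⟩ := hGne
      rw [fgen_eq] at hcG
      obtain ⟨l, hl, hlc⟩ := hcG
      -- split the list
      suffices h : ∀ l : List A, (∀ b ∈ l, b ∈ P ∪ {z}) → ∃ p ∈ P, ∃ n : ℕ, (p ⊙ rpow z n) ≤ rprod l by
        obtain ⟨p, hp, n, hn⟩ := h l hl
        exact ⟨c, hcC, p, hp, n, le_trans hn hlc⟩
      intro l
      induction l with
      | nil => intro _
               exact ⟨⊤, hPfil.top_mem, 0, by simp [ResiduatedLattice.mul_top]⟩
      | cons b l ih =>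
        intro hb
        obtain ⟨p, hp, n, hn⟩ := ih (fun a ha => hb a (List.mem_cons_of_mem _ ha))
        rcases hb b (List.mem_cons_self) with hbP | hbz
        · refine ⟨b ⊙ p, hPfil.2.1 b hbP p hp, n, ?_⟩
          rw [ResiduatedLattice.mul_assoc, rprod_cons]
          exact mul_mono_right _ hn
        · simp only [Set.mem_singleton_iff] at hbz
          subst hbz
          refine ⟨p, hp, n + 1, ?_⟩
          rw [rpow_succ, rprod_cons, ← ResiduatedLattice.mul_assoc,
            ResiduatedLattice.mul_comm p b, ResiduatedLattice.mul_assoc]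
          exact mul_mono_right _ hn
    obtain ⟨c₁, hc₁C, p, hp, n, hpn⟩ := hmeet x hx
    obtain ⟨c₂, hc₂C, q, hq, m, hqm⟩ := hmeet y hy
    have hr : ((p ⊙ q) ⊙ rpow (x ⊔ y) (n + m)) ∈ P :=
      hPfil.2.1 _ (hPfil.2.1 p hp q hq) _ (rpow_mem_filter hPfil hxy _)
    have hle : ((p ⊙ q) ⊙ rpow (x ⊔ y) (n + m)) ≤ c₁ ⊔ c₂ := by
      have h1 : ((p ⊙ q) ⊙ rpow (x ⊔ y) (n + m)) ≤ (p ⊙ q) ⊙ (rpow x n ⊔ rpow y m) :=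
        mul_mono_right _ (rpow_sup_le x y (n+m) n m rfl)
      refine le_trans h1 ?_
      rw [ResiduatedLattice.mul_comm]
      refine le_trans (sup_mul_le _ _ _) (sup_le ?_ ?_)
      · refine le_trans ?_ (le_trans hpn le_sup_left)
        rw [ResiduatedLattice.mul_comm]
        exact mul_mono_left (mul_le_left p q) _
      · refine le_trans ?_ (le_trans hqm le_sup_right)
        rw [ResiduatedLattice.mul_comm]
        exact mul_mono_left (mul_le_right p q) _
    have : c₁ ⊔ c₂ ∈ P := hPfil.mem_of_le hr hle
    rw [Set.eq_empty_iff_forall_notMem] at hPC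
    exact hPC _ ⟨this, hC.2 c₁ hc₁C c₂ hc₂C⟩

lemma isFilter_top : IsFilter ({⊤} : Set A) := by
  refine ⟨⟨⊤, rfl⟩, ?_, ?_⟩
  · rintro x rfl y rfl
    simp [ResiduatedLattice.mul_top]
  · rintro x rfl y
    simp

/-- every prime contains a minimal prime -/
lemma exists_minPrime_le {P : Set A} (hP : IsPrime P) : ∃ m : Set A, MinPrime m ∧ m ⊆ P := by
  set S : Set (Set A) := {Q | IsPrime Q ∧ Q ⊆ P} with hS
  obtain ⟨m, hmP, hmin⟩ : ∃ m, m ⊆ P ∧ Minimal (· ∈ S) m := by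
    apply zorn_superset_nonempty S ?_ P ⟨hP, Set.Subset.rfl⟩
    intro c hcS hchain hcne
    obtain ⟨Q₀, hQ₀⟩ := hcne
    refine ⟨⋂₀ c, ⟨⟨⟨?_, ?_, ?_⟩, ?_, ?_⟩, ?_⟩, fun s hs => Set.sInter_subset_of_mem hs⟩
    · exact ⟨⊤, fun Q hQ => (hcS hQ).1.1.top_mem⟩
    · intro x hx y hy
      exact fun Q hQ => (hcS hQ).1.1.2.1 x (hx Q hQ) y (hy Q hQ)
    · intro x hx y
      exact fun Q hQ => (hcS hQ).1.1.2.2 x (hx Q hQ) y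
    · intro h
      apply (hcS hQ₀).1.2.1
      apply Set.eq_univ_of_univ_subset
      rw [← h]
      exact Set.sInter_subset_of_mem hQ₀
    · intro x y hxy
      by_contra hne
      push_neg at hne
      obtain ⟨hx, hy⟩ := hne
      simp only [Set.mem_sInter, not_forall] at hx hy
      obtain ⟨Q₁, hQ₁, hxQ₁⟩ := hx
      obtain ⟨Q₂, hQ₂, hyQ₂⟩ := hy
      rcases hchain.total hQ₁ hQ₂ with h | h
      · rcases (hcS hQ₁).1.2.2 x y (hxy Q₁ hQ₁) with h' | h'
        · exact hxQ₁ h'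
        · exact hyQ₂ (h h')
      · rcases (hcS hQ₂).1.2.2 x y (hxy Q₂ hQ₂) with h' | h'
        · exact hxQ₁ (h h')
        · exact hyQ₂ h'
    · exact le_trans (Set.sInter_subset_of_mem hQ₀) (hcS hQ₀).2
  refine ⟨m, ⟨hmin.1.1, ?_⟩, hmP⟩
  intro Q hQ hQm
  exact Set.Subset.antisymm hQm (hmin.2 ⟨hQ, le_trans hQm hmP⟩ hQm)

/-- if `z ≠ ⊤` then some minimal prime omits `z` -/
lemma exists_minPrime_not_mem {z : A} (hz : z ≠ ⊤) : ∃ m : Set A, MinPrime m ∧ z ∉ m := by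
  obtain ⟨P, hP, -, hPC⟩ := prime_extension isFilter_top (C := {z})
    ⟨⟨z, rfl⟩, by rintro x rfl y rfl; simp⟩
    (by rw [Set.eq_empty_iff_forall_notMem]; rintro a ⟨rfl, rfl⟩; exact hz rfl)
  obtain ⟨m, hm, hmP⟩ := exists_minPrime_le hP
  refine ⟨m, hm, fun h => ?_⟩
  rw [Set.eq_empty_iff_forall_notMem] at hPC
  exact hPC z ⟨hmP h, rfl⟩


-- ### minimality characterization
lemma minPrime_perp_not_subset {m : Set A} (hm : MinPrime m) {x : A} (hx : x ∈ m) :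
    ∃ a ∈ perp {x}, a ∉ m := by
  by_contra hcon
  push_neg at hcon
  have hsub : perp {x} ⊆ m := fun a ha => hcon a ha
  set C : Set A := {c | c ∉ m ∨ ∃ d, (d ∉ m ∨ d = ⊥) ∧ c = x ⊔ d} with hCdef
  have hxC : x ∈ C := Or.inr ⟨⊥, Or.inr rfl, (sup_bot_eq x).symm⟩
  have hCV : VClosed C := by
    constructor
    · exact ⟨x, hxC⟩
    · rintro c₁ (hc₁ | ⟨d₁, hd₁, rfl⟩) c₂ (hc₂ | ⟨d₂, hd₂, rfl⟩)
      · exact Or.inl (hm.1.sup_not_mem hc₁ hc₂)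
      · refine Or.inr ⟨c₁ ⊔ d₂, Or.inl ?_, by simp [sup_assoc, sup_comm, sup_left_comm, sup_left_idem, sup_idem]⟩
        rcases hd₂ with h | rfl
        · exact hm.1.sup_not_mem hc₁ h
        · rwa [sup_bot_eq]
      · refine Or.inr ⟨d₁ ⊔ c₂, Or.inl ?_, by simp [sup_assoc, sup_comm, sup_left_comm, sup_left_idem, sup_idem]⟩
        rcases hd₁ with h | rfl
        · exact hm.1.sup_not_mem h hc₂
        · rwa [bot_sup_eq]
      · refine Or.inr ⟨d₁ ⊔ d₂, ?_, ?_⟩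
        · rcases hd₁ with h₁ | rfl
          · rcases hd₂ with h₂ | rfl
            · exact Or.inl (hm.1.sup_not_mem h₁ h₂)
            · rw [sup_bot_eq]; exact Or.inl h₁
          · rcases hd₂ with h₂ | rfl
            · rw [bot_sup_eq]; exact Or.inl h₂
            · exact Or.inr (by rw [sup_bot_eq])
        · simp [sup_assoc, sup_comm, sup_left_comm, sup_left_idem, sup_idem]
  have hdisj : ({⊤} : Set A) ∩ C = ∅ := by
    rw [Set.eq_empty_iff_forall_notMem]
    rintro a ⟨rfl, (h | ⟨d, hd, hda⟩)⟩
    · exact h (hm.1.1.top_mem)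
    · rcases hd with h | rfl
      · exact h (hsub (mem_perp_singleton.mpr hda.symm))
      · rw [sup_bot_eq] at hda
        refine hm.1.bot_not_mem (hsub ?_)
        rw [mem_perp_singleton, ← hda, sup_bot_eq]
  obtain ⟨Q, hQ, -, hQC⟩ := prime_extension isFilter_top hCV hdisj
  rw [Set.eq_empty_iff_forall_notMem] at hQC
  have hQm : Q ⊆ m := by
    intro a ha
    by_contra h
    exact hQC a ⟨ha, Or.inl h⟩
  have := hm.2 Q hQ hQm
  subst this
  exact hQC x ⟨hx, hxC⟩

lemma mem_of_perp_witness {m : Set A} (hm : IsPrime m) {x a : A} (ha : a ∈ perp {x})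
    (hna : a ∉ m) : x ∈ m := by
  rw [mem_perp_singleton] at ha
  rcases hm.2.2 x a (by rw [ha]; exact hm.1.top_mem) with h | h
  · exact h
  · exact absurd h hna

lemma exactly_one {m : Set A} (hm : MinPrime m) {x y : A}
    (h : perp (perp {x}) = perp {y}) : x ∈ m ↔ y ∉ m := by
  have hperp : perp {x} = perp (perp {y}) := by
    rw [← h, perp_perp_perp]
  have hxy : x ⊔ y = ⊤ := by
    rw [← mem_perp_singleton (x := x) (a := y), hperp]
    exact subset_perp_perp {y} rfl
  constructor
  · intro hx hy
    obtain ⟨a, ha, ham⟩ := minPrime_perp_not_subset hm hx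
    obtain ⟨b, hb, hbm⟩ := minPrime_perp_not_subset hm hy
    rw [hperp] at ha
    have : b ⊔ a = ⊤ := ha b hb
    rcases hm.1.2.2 b a (by rw [this]; exact hm.1.1.top_mem) with hc | hc
    · exact hbm hc
    · exact ham hc
  · intro hy
    rcases hm.1.2.2 x y (by rw [hxy]; exact hm.1.1.top_mem) with hc | hc
    · exact hc
    · exact absurd hc hy

-- ### joins of lists
def vjoin (l : List A) : A := l.foldr (· ⊔ ·) ⊥

@[simp] lemma vjoin_nil : vjoin ([] : List A) = ⊥ := rfl

@[simp] lemma vjoin_cons (a : A) (l : List A) : vjoin (a :: l) = a ⊔ vjoin l := rfl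

lemma vjoin_append (l₁ l₂ : List A) : vjoin (l₁ ++ l₂) = vjoin l₁ ⊔ vjoin l₂ := by
  induction l₁ with
  | nil => simp
  | cons a l ih => simp [ih, sup_assoc]

lemma vjoin_not_mem_prime {P : Set A} (hP : IsPrime P) :
    ∀ l : List A, (∀ a ∈ l, a ∉ P) → vjoin l ∉ P := by
  intro l
  induction l with
  | nil => intro _ h; exact hP.bot_not_mem h
  | cons a l ih =>
    intro h
    exact hP.sup_not_mem (h a (List.mem_cons_self))
      (ih fun b hb => h b (List.mem_cons_of_mem _ hb))

-- ### the covering lemma for the star condition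
lemma star_cover (hstar : ∀ x : A, ∃ y : A, perp (perp {x}) = perp {y}) (X : Set A)
    (hX : ∀ m : Set A, MinPrime m → ∃ x ∈ X, x ∉ m) :
    ∃ t : Finset A, ↑t ⊆ X ∧ ∀ m : Set A, MinPrime m → ∃ x ∈ t, x ∉ m := by
  classical
  by_contra hcon
  push_neg at hcon
  choose f hf using hstar
  -- there is a minimal prime, hence X is nonempty
  obtain ⟨m₁, hm₁, -⟩ := hcon ∅ (by simp)
  obtain ⟨x₀, hx₀X, -⟩ := hX m₁ hm₁
  set C : Set A := {c | ∃ l : List A, l ≠ [] ∧ (∀ x ∈ l, x ∈ X) ∧ c = vjoin (l.map f)} with hC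
  have hCV : VClosed C := by
    constructor
    · exact ⟨vjoin ([x₀].map f), [x₀], by simp, by simpa using hx₀X, rfl⟩
    · rintro c₁ ⟨l₁, hl₁, hl₁X, rfl⟩ c₂ ⟨l₂, hl₂, hl₂X, rfl⟩
      refine ⟨l₁ ++ l₂, by simp [hl₁], ?_, by rw [List.map_append, vjoin_append]⟩
      intro a ha
      rcases List.mem_append.mp ha with h | h
      · exact hl₁X a h
      · exact hl₂X a h
  have hdisj : ({⊤} : Set A) ∩ C = ∅ := by
    rw [Set.eq_empty_iff_forall_notMem]
    rintro a ⟨rfl, l, hlne, hlX, htop⟩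
    obtain ⟨m, hm, hmt⟩ := hcon l.toFinset (by intro a ha; exact hlX a (List.mem_toFinset.mp ha))
    have : vjoin (l.map f) ∉ m := by
      apply vjoin_not_mem_prime hm.1
      intro b hb
      obtain ⟨x, hxl, rfl⟩ := List.mem_map.mp hb
      exact (exactly_one hm (hf x)).mp (hmt x (List.mem_toFinset.mpr hxl))
    rw [← htop] at this
    exact this hm.1.1.top_mem
  obtain ⟨Q, hQ, -, hQC⟩ := prime_extension isFilter_top hCV hdisj
  obtain ⟨m, hm, hmQ⟩ := exists_minPrime_le hQ
  obtain ⟨x, hxX, hxm⟩ := hX m hm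
  have hfx : f x ∈ m := by
    by_contra h
    exact hxm ((exactly_one hm (hf x)).mpr h)
  rw [Set.eq_empty_iff_forall_notMem] at hQC
  exact hQC (f x) ⟨hmQ hfx, [x], by simp, by simpa using hxX, by simp [vjoin]⟩


end RL

/-- The space of minimal prime filters. -/
def MinSpace (A : Type u) [ResiduatedLattice A] : Type u := {m : Set A // RL.MinPrime m}

instance (A : Type u) [ResiduatedLattice A] : TopologicalSpace (MinSpace A) :=
  TopologicalSpace.generateFrom {S : Set (MinSpace A) | ∃ x : A, S = {m : MinSpace A | x ∉ m.1}}

namespace RL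

variable {A : Type u} [ResiduatedLattice A]

/-- the basic open set `d(x)` -/
def dd (x : A) : Set (MinSpace A) := {m : MinSpace A | x ∉ m.1}

lemma isOpen_dd (x : A) : IsOpen (dd (A := A) x) :=
  TopologicalSpace.GenerateOpen.basic _ ⟨x, rfl⟩

lemma basic_nhds {U : Set (MinSpace A)} (hU : IsOpen U) :
    ∀ m ∈ U, ∃ z : A, m ∈ dd z ∧ dd z ⊆ U := by
  have h : TopologicalSpace.GenerateOpen
      {S : Set (MinSpace A) | ∃ x : A, S = {m : MinSpace A | x ∉ m.1}} U := hU
  clear hU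
  induction h with
  | @basic S hS =>
    obtain ⟨z, rfl⟩ := hS
    exact fun m hm => ⟨z, hm, Set.Subset.rfl⟩
  | univ =>
    exact fun m _ => ⟨⊥, m.2.1.bot_not_mem, fun _ _ => trivial⟩
  | inter U V hU hV ihU ihV =>
    rintro m ⟨hmU, hmV⟩
    obtain ⟨z₁, hm₁, hs₁⟩ := ihU m hmU
    obtain ⟨z₂, hm₂, hs₂⟩ := ihV m hmV
    refine ⟨z₁ ⊔ z₂, m.2.1.sup_not_mem hm₁ hm₂, ?_⟩
    intro m' hm'
    have h₁ : z₁ ∉ m'.1 := fun h => hm' (m'.2.1.1.mem_of_le h le_sup_left)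
    have h₂ : z₂ ∉ m'.1 := fun h => hm' (m'.2.1.1.mem_of_le h le_sup_right)
    exact ⟨hs₁ h₁, hs₂ h₂⟩
  | sUnion S hS ih =>
    rintro m ⟨U, hUS, hmU⟩
    obtain ⟨z, hmz, hsz⟩ := ih U hUS m hmU
    exact ⟨z, hmz, fun m' hm' => ⟨U, hUS, hsz hm'⟩⟩

end RL

theorem min_space_compact_iff_star {A : Type u} [ResiduatedLattice A] :
    CompactSpace (MinSpace A) ↔
      ∀ x : A, ∃ y : A, RL.perp (RL.perp {x}) = RL.perp {y} := by
  classical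
  constructor
  · intro hcomp x
    haveI := hcomp
    set ι := Option {a : A // a ∈ RL.perp {x}} with hι
    set U : ι → Set (MinSpace A) := fun i =>
      match i with
      | none => RL.dd x
      | some a => RL.dd a.val with hU
    have hUo : ∀ i, IsOpen (U i) := by
      rintro (_ | a) <;> exact RL.isOpen_dd _
    have hcov : (Set.univ : Set (MinSpace A)) ⊆ ⋃ i, U i := by
      intro m _
      rw [Set.mem_iUnion]
      by_cases hx : x ∈ m.1
      · obtain ⟨a, ha, ham⟩ := RL.minPrime_perp_not_subset m.2 hx
        exact ⟨some ⟨a, ha⟩, ham⟩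
      · exact ⟨none, hx⟩
    obtain ⟨t, ht⟩ := (isCompact_univ (X := MinSpace A)).elim_finite_subcover U hUo hcov
    set l : List A := t.toList.filterMap (fun i => Option.map Subtype.val i) with hl
    have hlmem : ∀ a ∈ l, a ∈ RL.perp {x} := by
      intro a ha
      rw [hl, List.mem_filterMap] at ha
      obtain ⟨i, -, hi⟩ := ha
      match i with
      | none => simp at hi
      | some b => rw [Option.map_some] at hi; cases (Option.some_inj.mp hi); exact b.2
    set y := RL.rprod l with hy
    have hyp : y ∈ RL.perp {x} := RL.rprod_mem_filter (RL.isFilter_perp _) hlmem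
    refine ⟨y, Set.Subset.antisymm ?_ ?_⟩
    · intro b hb
      rw [RL.mem_perp_singleton]
      exact hb y hyp
    · intro b hb
      have hyb : y ⊔ b = ⊤ := hb y rfl
      intro a ha
      by_contra hne
      obtain ⟨m, hm, hmab⟩ := RL.exists_minPrime_not_mem hne
      have ham : a ∉ m := fun h => hmab (hm.1.1.mem_of_le h le_sup_left)
      have hbm : b ∉ m := fun h => hmab (hm.1.1.mem_of_le h le_sup_right)
      have hxm : x ∈ m := RL.mem_of_perp_witness hm.1 ha ham
      have hym : y ∈ m := RL.mem_of_perp_witness hm.1 hb hbm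
      have hmem : (⟨m, hm⟩ : MinSpace A) ∈ ⋃ i ∈ t, U i := ht (Set.mem_univ _)
      replace hmem := Set.mem_iUnion₂.mp hmem
      obtain ⟨i, hit, hiU⟩ := hmem
      match i with
      | none => exact hiU hxm
      | some a' =>
        have hal : a'.1 ∈ l := by
          rw [hl, List.mem_filterMap]
          exact ⟨some a', Finset.mem_toList.mpr hit, rfl⟩
        exact hiU (hm.1.1.mem_of_le hym (RL.rprod_le_of_mem hal))
  · intro hstar
    constructor
    apply isCompact_of_finite_subcover
    intro ι U hUo hcov
    have hz : ∀ mm : MinSpace A, ∃ z : A, ∃ i : ι, z ∉ mm.1 ∧ RL.dd z ⊆ U i := by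
      intro mm
      obtain ⟨i, hi⟩ := Set.mem_iUnion.mp (hcov (Set.mem_univ mm))
      obtain ⟨z, hmz, hsub⟩ := RL.basic_nhds (hUo i) mm hi
      exact ⟨z, i, hmz, hsub⟩
    choose zf g hzf hgsub using hz
    have hX : ∀ m : Set A, RL.MinPrime m → ∃ x ∈ Set.range zf, x ∉ m :=
      fun m hm => ⟨zf ⟨m, hm⟩, ⟨⟨m, hm⟩, rfl⟩, hzf ⟨m, hm⟩⟩
    obtain ⟨t, htX, hcover⟩ := RL.star_cover hstar (Set.range zf) hX
    have hidx : ∀ x ∈ t, ∃ i : ι, RL.dd x ⊆ U i := by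
      intro x hx
      obtain ⟨mm, rfl⟩ := htX hx
      exact ⟨g mm, hgsub mm⟩
    choose idx hidxs using hidx
    refine ⟨t.attach.image (fun x => idx x.1 x.2), ?_⟩
    intro mm _
    obtain ⟨x, hxt, hxm⟩ := hcover mm.1 mm.2
    simp only [Set.mem_iUnion]
    exact ⟨idx x hxt, Finset.mem_image.mpr ⟨⟨x, hxt⟩, Finset.mem_attach _ _, rfl⟩,
      hidxs x hxt hxm⟩
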